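/- If the Poincaré series ∑_{γ∈Γ} e^{−δ d(o,γo)} converges, then the radial limit set has μ_o-measure zero: μ_o(L_Γ^rad) = 0. -/

import Mathlib

open MeasureTheory

/-- If the Poincaré series `∑_{γ∈Γ} e^{−δ d(o,γo)}` converges, then the radial
limit set `L_Γ^rad = ⋃_{c>0} ⋂_{R>0} ⋃_{d(o,γo)>R} pr_o(B_{γo}(c))` has `μ_o`-measure zero.
Here `Sh γ c` denotes the shadow `pr_o(B_{γo}(c))`, which is monotone in `c` and satisfies
the upper bound of the shadow lemma. -/
theorem radial_limit_null_of_convergent {X Bd Γ : Type*} [MetricSpace X] [MeasurableSpace Bd]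
    [Group Γ] [Countable Γ] [MulAction Γ X]
    (δ : ℝ) (hδ : 0 < δ) (o : X)
    (μo : Measure Bd)
    (Sh : Γ → ℝ → Set Bd)
    (hmono : ∀ (γ : Γ) (c c' : ℝ), c ≤ c' → Sh γ c ⊆ Sh γ c')
    (hshadow : ∀ r > (0:ℝ), ∃ c₀ ≥ r, ∀ c ≥ c₀, ∃ D > (1:ℝ), ∀ γ : Γ,
      2 * c < dist o (γ • o) →
        μo (Sh γ c) ≤ ENNReal.ofReal (D * Real.exp (-δ * dist o (γ • o))))
    (hsum : Summable (fun γ : Γ => Real.exp (-δ * dist o (γ • o)))) :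
    μo (⋃ c > (0:ℝ), ⋂ R > (0:ℝ), ⋃ γ ∈ {γ : Γ | R < dist o (γ • o)}, Sh γ c) = 0 := by
  set A : ℝ → Set Bd :=
    fun c => ⋂ R > (0:ℝ), ⋃ γ ∈ {γ : Γ | R < dist o (γ • o)}, Sh γ c with hA
  -- monotonicity of `A`
  have hAmono : ∀ c c' : ℝ, c ≤ c' → A c ⊆ A c' := by
    intro c c' hcc'
    refine Set.iInter₂_mono fun R hR => Set.iUnion₂_mono fun γ hγ => hmono γ c c' hcc'
  -- each `A c` with `c > 0` is null
  have key : ∀ c : ℝ, 0 < c → μo (A c) = 0 := by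
    intro c hc
    obtain ⟨c₀, hc₀c, H⟩ := hshadow c hc
    obtain ⟨D, hD, hbound⟩ := H c₀ le_rfl
    have hc₀pos : 0 < c₀ := lt_of_lt_of_le hc hc₀c
    have hDpos : 0 < D := lt_trans one_pos hD
    -- it suffices to show `A c₀` is null
    have hsub : A c ⊆ A c₀ := hAmono c c₀ hc₀c
    suffices h0 : μo (A c₀) = 0 by
      exact measure_mono_null hsub h0
    -- the weighted series in ℝ≥0∞
    set g : Γ → ENNReal := fun γ => ENNReal.ofReal (D * Real.exp (-δ * dist o (γ • o))) with hg
    have hsumD : Summable (fun γ : Γ => D * Real.exp (-δ * dist o (γ • o))) := hsum.mul_left D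
    have hgfin : (∑' γ, g γ) ≠ ⊤ := by
      rw [hg]
      rw [← ENNReal.ofReal_tsum_of_nonneg
        (fun γ => mul_nonneg hDpos.le (Real.exp_pos _).le) hsumD]
      exact ENNReal.ofReal_ne_top
    -- main estimate: for all ε > 0, μo (A c₀) ≤ ofReal ε
    have main : ∀ ε : ℝ, 0 < ε → μo (A c₀) ≤ ENNReal.ofReal ε := by
      intro ε hε
      obtain ⟨T, hT⟩ :=
        ((tendsto_order.1 (ENNReal.tendsto_tsum_compl_atTop_zero hgfin)).2
          (ENNReal.ofReal ε) (ENNReal.ofReal_pos.2 hε)).exists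
      -- choose a radius beyond everything in `T` and beyond `2 c₀`
      obtain ⟨M, hM⟩ := (T.image (fun γ => dist o (γ • o))).exists_le
      set R : ℝ := max M (2 * c₀) + 1 with hR
      have hRpos : 0 < R := by
        have : (0:ℝ) ≤ max M (2 * c₀) :=
          le_trans (by positivity) (le_max_right _ _)
        linarith
      have hR2c₀ : 2 * c₀ < R := lt_of_le_of_lt (le_max_right M (2 * c₀)) (by linarith)
      -- `A c₀` is contained in the union over `γ` with `R < dist o (γ • o)`
      have hAin : A c₀ ⊆ ⋃ γ ∈ {γ : Γ | R < dist o (γ • o)}, Sh γ c₀ := by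
        intro x hx
        simp only [hA, Set.mem_iInter] at hx
        exact hx R hRpos
      have h1 : μo (A c₀) ≤ ∑' γ : {γ : Γ | R < dist o (γ • o)}, μo (Sh (γ : Γ) c₀) :=
        le_trans (measure_mono hAin)
          (measure_biUnion_le μo (Set.to_countable _) fun γ => Sh γ c₀)
      have h2 : ∑' γ : {γ : Γ | R < dist o (γ • o)}, μo (Sh (γ : Γ) c₀)
          ≤ ∑' γ : {γ : Γ | R < dist o (γ • o)}, g (γ : Γ) := by
        refine ENNReal.tsum_le_tsum fun γ => ?_
        exact hbound γ (lt_trans hR2c₀ γ.2)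
      -- the index set avoids `T`
      have hST : {γ : Γ | R < dist o (γ • o)} ⊆ {γ : Γ | γ ∉ T} := by
        intro γ hγ hγT
        have : dist o (γ • o) ≤ M := hM _ (Finset.mem_image_of_mem _ hγT)
        have : dist o (γ • o) < R := lt_of_le_of_lt (le_trans this (le_max_left _ _)) (by linarith)
        exact absurd hγ (not_lt.2 this.le)
      have h3 : ∑' γ : {γ : Γ | R < dist o (γ • o)}, g (γ : Γ)
          ≤ ∑' γ : {γ : Γ | γ ∉ T}, g (γ : Γ) := by
        rw [tsum_subtype, tsum_subtype]
        exact ENNReal.tsum_le_tsum fun γ =>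
          Set.indicator_le_indicator_of_subset hST (fun _ => zero_le) γ
      have h4 : ∑' γ : {γ : Γ | γ ∉ T}, g (γ : Γ) < ENNReal.ofReal ε := hT
      exact le_trans h1 (le_trans h2 (le_trans h3 h4.le))
    -- conclude nullity
    refine le_antisymm ?_ zero_le
    refine ENNReal.le_of_forall_pos_le_add fun ε hε _ => ?_
    have := main ε (by exact_mod_cast hε)
    simpa [ENNReal.ofReal_coe_nnreal] using this
  -- reduce the uncountable union over `c > 0` to a countable one
  show μo (⋃ c > (0:ℝ), A c) = 0
  have hcover : (⋃ c > (0:ℝ), A c) ⊆ ⋃ n : ℕ, A (n + 1) := by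
    intro x hx
    simp only [Set.mem_iUnion] at hx ⊢
    obtain ⟨c, hc, hxc⟩ := hx
    refine ⟨⌈c⌉₊, hAmono c (⌈c⌉₊ + 1) ?_ hxc⟩
    exact le_trans (Nat.le_ceil c) (by linarith)
  refine measure_mono_null hcover ?_
  refine measure_iUnion_null fun n => key (n + 1) (by positivity)
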